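/- Let (x_j)_{j≥0} be the iterates of the stochastic coordinate descent (SCD) method applied to minimizing f_β over the nonnegative orthant, started from x_0 ≥ 0, with coordinate indices i(j) chosen independently and uniformly at random from {1,…,n}. Suppose ‖x_j − x(β)‖₂ ≤ R holds for all iterates j (almost surely), and let l := 1/β and f_β* := f_β(x(β)). Then for any η ∈ (0,1) and any ε̄ > 0, P(f_β(x_j) − f_β* < ε̄) ≥ 1 − η provided that j ≥ (n(l + L_max)/l) · |log( (L_max/(2 η ε̄)) (R² + (2/L_max)(f_β(x_0) − f_β*)) )|. -/

import Mathlib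

open Matrix Finset MeasureTheory ProbabilityTheory

/-- Euclidean norm of a finitely-indexed real vector. -/
noncomputable def l2norm {ι : Type*} [Fintype ι] (x : ι → ℝ) : ℝ :=
  Real.sqrt (∑ i, (x i) ^ 2)

/-- Frobenius norm of a real matrix. -/
noncomputable def frobNorm {ι κ : Type*} [Fintype ι] [Fintype κ] (A : Matrix ι κ ℝ) : ℝ :=
  Real.sqrt (∑ i, ∑ j, (A i j) ^ 2)

/-- Euclidean inner product. -/
noncomputable def rdot {ι : Type*} [Fintype ι] (a b : ι → ℝ) : ℝ := ∑ i, a i * b i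

/-- The regularized quadratic penalty objective
`f_β(x) = cᵀx − ūᵀ(Ax−b) + (β/2)‖Ax−b‖² + (1/(2β))‖x−x̄‖²`. -/
noncomputable def fpen {ι κ : Type*} [Fintype ι] [Fintype κ]
    (A : Matrix ι κ ℝ) (b : ι → ℝ) (c : κ → ℝ) (ub : ι → ℝ) (xb : κ → ℝ)
    (β : ℝ) (x : κ → ℝ) : ℝ :=
  rdot c x - rdot ub (A.mulVec x - b) + (β / 2) * l2norm (A.mulVec x - b) ^ 2
    + (1 / (2 * β)) * l2norm (x - xb) ^ 2

/-- The gradient map `∇f_β(x) = c − Aᵀū + βAᵀ(Ax − b) + (1/β)(x − x̄)` of `f_β`. -/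
noncomputable def gradf {ι κ : Type*} [Fintype ι] [Fintype κ]
    (A : Matrix ι κ ℝ) (b : ι → ℝ) (c : κ → ℝ) (ub : ι → ℝ) (xb : κ → ℝ)
    (β : ℝ) (x : κ → ℝ) : κ → ℝ :=
  c - Aᵀ.mulVec ub + β • Aᵀ.mulVec (A.mulVec x - b) + (1 / β) • (x - xb)


noncomputable def Ssq {ι : Type*} [Fintype ι] (x : ι → ℝ) : ℝ := ∑ i, x i ^ 2

lemma Ssq_nonneg {ι : Type*} [Fintype ι] (x : ι → ℝ) : 0 ≤ Ssq x :=
  Finset.sum_nonneg fun i _ => sq_nonneg _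

lemma l2sq {ι : Type*} [Fintype ι] (x : ι → ℝ) : l2norm x ^ 2 = Ssq x :=
  Real.sq_sqrt (Ssq_nonneg x)

lemma Ssq_add {ι : Type*} [Fintype ι] (u v : ι → ℝ) :
    Ssq (u + v) = Ssq u + 2 * rdot u v + Ssq v := by
  simp only [Ssq, rdot, Pi.add_apply, Finset.mul_sum, ← Finset.sum_add_distrib]
  exact Finset.sum_congr rfl fun i _ => by ring

lemma rdot_add_left {ι : Type*} [Fintype ι] (a b d : ι → ℝ) :
    rdot (a + b) d = rdot a d + rdot b d := by
  simp [rdot, add_mul, Finset.sum_add_distrib]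

lemma rdot_sub_left {ι : Type*} [Fintype ι] (a b d : ι → ℝ) :
    rdot (a - b) d = rdot a d - rdot b d := by
  simp [rdot, sub_mul, Finset.sum_sub_distrib]

lemma rdot_smul_left {ι : Type*} [Fintype ι] (r : ℝ) (a d : ι → ℝ) :
    rdot (r • a) d = r * rdot a d := by
  simp [rdot, Finset.mul_sum, mul_assoc]

lemma rdot_add_right {ι : Type*} [Fintype ι] (a u v : ι → ℝ) :
    rdot a (u + v) = rdot a u + rdot a v := by
  simp [rdot, mul_add, Finset.sum_add_distrib]

lemma rdot_transpose {m n : ℕ} (A : Matrix (Fin m) (Fin n) ℝ) (u : Fin m → ℝ) (d : Fin n → ℝ) :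
    rdot (Aᵀ.mulVec u) d = rdot u (A.mulVec d) := by
  simp only [rdot, Matrix.mulVec, dotProduct, Matrix.transpose_apply,
    Finset.sum_mul, Finset.mul_sum]
  rw [Finset.sum_comm]
  exact Finset.sum_congr rfl fun j _ => Finset.sum_congr rfl fun i _ => by ring

lemma fpen_expand {m n : ℕ} (A : Matrix (Fin m) (Fin n) ℝ) (b : Fin m → ℝ) (c : Fin n → ℝ)
    (ub : Fin m → ℝ) (xb : Fin n → ℝ) {β : ℝ} (hβ : 0 < β) (x d : Fin n → ℝ) :
    fpen A b c ub xb β (x + d) = fpen A b c ub xb β x + rdot (gradf A b c ub xb β x) d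
      + (β / 2) * Ssq (A.mulVec d) + (1 / (2 * β)) * Ssq d := by
  have h1 : A.mulVec (x + d) - b = (A.mulVec x - b) + A.mulVec d := by
    rw [Matrix.mulVec_add]; abel
  have h2 : (x + d) - xb = (x - xb) + d := by abel
  unfold fpen gradf
  rw [h1, h2]
  simp only [l2sq, Ssq_add, rdot_add_right, rdot_add_left, rdot_sub_left, rdot_smul_left,
    rdot_transpose]
  field_simp
  ring

lemma Ssq_single {n : ℕ} (i : Fin n) (t : ℝ) : Ssq (Pi.single i t) = t ^ 2 := by
  simp [Ssq, Pi.single_apply]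

lemma rdot_single {n : ℕ} (g : Fin n → ℝ) (i : Fin n) (t : ℝ) :
    rdot g (Pi.single i t) = g i * t := by
  simp [rdot, Pi.single_apply]

lemma fpen_coord {m n : ℕ} (A : Matrix (Fin m) (Fin n) ℝ) (b : Fin m → ℝ) (c : Fin n → ℝ)
    (ub : Fin m → ℝ) (xb : Fin n → ℝ) {β : ℝ} (hβ : 0 < β) (x : Fin n → ℝ) (i : Fin n) (t : ℝ) :
    fpen A b c ub xb β (x + Pi.single i t) = fpen A b c ub xb β x
      + gradf A b c ub xb β x i * t + t ^ 2 / 2 * (β * (∑ j, (A j i) ^ 2) + β⁻¹) := by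
  rw [fpen_expand A b c ub xb hβ x (Pi.single i t), rdot_single, Ssq_single,
    Matrix.mulVec_single]
  have : Ssq (fun j => A j i * t) = t ^ 2 * ∑ j, (A j i) ^ 2 := by
    simp [Ssq, Finset.mul_sum]
    exact Finset.sum_congr rfl fun j _ => by ring
  rw [show MulOpposite.op t • A.col i = (fun j => A j i * t) from by funext j; simp [Matrix.col],
    this]
  field_simp
  ring

/-- The deterministic SCD coordinate step. -/
noncomputable def scdStep {m n : ℕ} (A : Matrix (Fin m) (Fin n) ℝ) (b : Fin m → ℝ)
    (c : Fin n → ℝ) (ub : Fin m → ℝ) (xb : Fin n → ℝ) (β Lmax : ℝ)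
    (x : Fin n → ℝ) (v : Fin n) : Fin n → ℝ :=
  fun i => if i = v then max 0 (x i - (1 / Lmax) * gradf A b c ub xb β x i) else x i

lemma scdStep_nonneg {m n : ℕ} (A : Matrix (Fin m) (Fin n) ℝ) (b : Fin m → ℝ)
    (c : Fin n → ℝ) (ub : Fin m → ℝ) (xb : Fin n → ℝ) (β Lmax : ℝ)
    (x : Fin n → ℝ) (hx : ∀ i, 0 ≤ x i) (v : Fin n) :
    ∀ i, 0 ≤ scdStep A b c ub xb β Lmax x v i := by
  intro i
  unfold scdStep
  by_cases h : i = v <;> simp [h, hx i, le_max_left]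

lemma scdStep_eq {m n : ℕ} (A : Matrix (Fin m) (Fin n) ℝ) (b : Fin m → ℝ)
    (c : Fin n → ℝ) (ub : Fin m → ℝ) (xb : Fin n → ℝ) (β Lmax : ℝ)
    (x : Fin n → ℝ) (v : Fin n) :
    scdStep A b c ub xb β Lmax x v =
      x + Pi.single v (max 0 (x v - (1 / Lmax) * gradf A b c ub xb β x v) - x v) := by
  funext i
  by_cases h : i = v
  · subst h; simp [scdStep]
  · simp [scdStep, h, Pi.single_apply]

lemma scdStep_bound {m n : ℕ} (A : Matrix (Fin m) (Fin n) ℝ) (b : Fin m → ℝ)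
    (c : Fin n → ℝ) (ub : Fin m → ℝ) (xb : Fin n → ℝ) {β Lmax : ℝ}
    (hβ : 0 < β) (hL : 0 < Lmax)
    (hLc : ∀ i, β * (∑ j, (A j i) ^ 2) + β⁻¹ ≤ Lmax)
    (x : Fin n → ℝ) (v : Fin n) (hxv : 0 ≤ x v)
    (s : ℝ) (hs : 0 ≤ x v + s) :
    fpen A b c ub xb β (scdStep A b c ub xb β Lmax x v) ≤
      fpen A b c ub xb β x + gradf A b c ub xb β x v * s + Lmax / 2 * s ^ 2 := by
  set g := gradf A b c ub xb β x v with hg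
  set t : ℝ := max 0 (x v - (1 / Lmax) * g) - x v with ht
  have htm : t = max (-(x v)) (-(g / Lmax)) := by
    rw [ht, ← max_sub_sub_right]
    congr 1 <;> ring
  have h1 : fpen A b c ub xb β (scdStep A b c ub xb β Lmax x v)
      ≤ fpen A b c ub xb β x + g * t + Lmax / 2 * t ^ 2 := by
    rw [scdStep_eq, ← ht, fpen_coord A b c ub xb hβ x v t, ← hg]
    have := hLc v
    nlinarith [sq_nonneg t]
  clear_value t g
  have h2 : g * t + Lmax / 2 * t ^ 2 ≤ g * s + Lmax / 2 * s ^ 2 := by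
    have key : 0 ≤ (s - t) * (g + Lmax * t) := by
      rcases le_total (-(x v)) (-(g / Lmax)) with hc | hc
      · have : t = -(g / Lmax) := by rw [htm, max_eq_right hc]
        rw [this]
        have : g + Lmax * -(g / Lmax) = 0 := by field_simp; ring
        rw [this, mul_zero]
      · have htx : t = -(x v) := by rw [htm, max_eq_left hc]
        have hst : 0 ≤ s - t := by rw [htx]; linarith
        have hgt : 0 ≤ g + Lmax * t := by
          rw [htx]
          have hxg : x v ≤ g / Lmax := by linarith [neg_le_neg hc]
          have := (le_div_iff₀ hL).mp hxg
          linarith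
        exact mul_nonneg hst hgt
    have expand : g * s + Lmax / 2 * s ^ 2 - (g * t + Lmax / 2 * t ^ 2)
        = (s - t) * (g + Lmax * t) + Lmax / 2 * (s - t) ^ 2 := by ring
    have h3 : 0 ≤ Lmax / 2 * (s - t) ^ 2 :=
      mul_nonneg (by linarith) (sq_nonneg _)
    linarith
  linarith

lemma strong_conv {m n : ℕ} (A : Matrix (Fin m) (Fin n) ℝ) (b : Fin m → ℝ) (c : Fin n → ℝ)
    (ub : Fin m → ℝ) (xb : Fin n → ℝ) {β : ℝ} (hβ : 0 < β) (x y : Fin n → ℝ) :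
    rdot (gradf A b c ub xb β x) (y - x) ≤
      fpen A b c ub xb β y - fpen A b c ub xb β x - (1 / (2 * β)) * Ssq (y - x) := by
  have h := fpen_expand A b c ub xb hβ x (y - x)
  rw [add_sub_cancel] at h
  have h1 : 0 ≤ (β / 2) * Ssq (A.mulVec (y - x)) :=
    mul_nonneg (by linarith) (Ssq_nonneg _)
  linarith

lemma sum_scdStep_le {m n : ℕ} (A : Matrix (Fin m) (Fin n) ℝ) (b : Fin m → ℝ) (c : Fin n → ℝ)
    (ub : Fin m → ℝ) (xb : Fin n → ℝ) {β Lmax l : ℝ}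
    (hβ : 0 < β) (hL : 0 < Lmax) (hl : l = 1 / β)
    (hLc : ∀ i, β * (∑ j, (A j i) ^ 2) + β⁻¹ ≤ Lmax)
    (xβ : Fin n → ℝ) (hβnn : ∀ i, 0 ≤ xβ i)
    (x : Fin n → ℝ) (hx : ∀ i, 0 ≤ x i) :
    ∑ v : Fin n, fpen A b c ub xb β (scdStep A b c ub xb β Lmax x v) ≤
      n * fpen A b c ub xb β x
        + (l / (l + Lmax)) * (fpen A b c ub xb β xβ - fpen A b c ub xb β x) := by
  have hl0 : 0 < l := by rw [hl]; positivity
  set α := l / (l + Lmax) with hα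
  have hα0 : 0 < α := div_pos hl0 (by linarith)
  have hα1 : α ≤ 1 := by
    rw [hα]; rw [div_le_one (by linarith)]; linarith
  set d : Fin n → ℝ := fun v => xβ v - x v with hd
  have hfeas : ∀ v, 0 ≤ x v + α * d v := by
    intro v
    have h1 := hx v; have h2 := hβnn v
    have : x v + α * d v = (1 - α) * x v + α * xβ v := by rw [hd]; ring
    rw [this]
    have := mul_nonneg (by linarith : (0:ℝ) ≤ 1 - α) h1
    have := mul_nonneg hα0.le h2
    linarith
  have hstepv : ∀ v : Fin n, fpen A b c ub xb β (scdStep A b c ub xb β Lmax x v) ≤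
      fpen A b c ub xb β x + gradf A b c ub xb β x v * (α * d v)
        + Lmax / 2 * (α * d v) ^ 2 :=
    fun v => scdStep_bound A b c ub xb hβ hL hLc x v (hx v) (α * d v) (hfeas v)
  have hsum := Finset.sum_le_sum (fun v (_ : v ∈ Finset.univ) => hstepv v)
  have heq : ∑ v : Fin n, (fpen A b c ub xb β x + gradf A b c ub xb β x v * (α * d v)
        + Lmax / 2 * (α * d v) ^ 2)
      = n * fpen A b c ub xb β x + α * rdot (gradf A b c ub xb β x) d
        + Lmax / 2 * α ^ 2 * Ssq d := by
    rw [Finset.sum_add_distrib, Finset.sum_add_distrib, Finset.sum_const,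
      Finset.card_univ, Fintype.card_fin, nsmul_eq_mul]
    congr 1
    · congr 1
      rw [rdot, Finset.mul_sum]
      exact Finset.sum_congr rfl fun v _ => by ring
    · rw [Ssq, Finset.mul_sum]
      exact Finset.sum_congr rfl fun v _ => by ring
  have hsc : rdot (gradf A b c ub xb β x) d ≤
      fpen A b c ub xb β xβ - fpen A b c ub xb β x - (1 / (2 * β)) * Ssq d := by
    have := strong_conv A b c ub xb hβ x xβ
    have hdd : xβ - x = d := rfl
    rwa [hdd] at this
  have hS : 0 ≤ Ssq d := Ssq_nonneg d
  have hLα : Lmax * α ≤ l := by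
    rw [hα]
    rw [← mul_div_assoc, div_le_iff₀ (by linarith : (0:ℝ) < l + Lmax)]
    nlinarith
  have hquad : Lmax / 2 * α ^ 2 * Ssq d ≤ α * ((1 / (2 * β)) * Ssq d) := by
    have h12 : (1:ℝ) / (2 * β) = l / 2 := by rw [hl]; field_simp
    rw [h12]
    have : Lmax / 2 * α ^ 2 = (Lmax * α) * α / 2 := by ring
    rw [this]
    have h1 : (Lmax * α) * α / 2 ≤ l * α / 2 := by nlinarith
    have h2 : α * (l / 2 * Ssq d) = l * α / 2 * Ssq d := by ring
    nlinarith
  calc ∑ v : Fin n, fpen A b c ub xb β (scdStep A b c ub xb β Lmax x v)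
      ≤ n * fpen A b c ub xb β x + α * rdot (gradf A b c ub xb β x) d
        + Lmax / 2 * α ^ 2 * Ssq d := by rw [← heq]; exact hsum
    _ ≤ n * fpen A b c ub xb β x
        + α * (fpen A b c ub xb β xβ - fpen A b c ub xb β x) := by nlinarith

/-- Deterministic SCD iterates as a function of the coordinate history. -/
noncomputable def scdIter {m n : ℕ} (A : Matrix (Fin m) (Fin n) ℝ) (b : Fin m → ℝ)
    (c : Fin n → ℝ) (ub : Fin m → ℝ) (xb : Fin n → ℝ) (β Lmax : ℝ) (x0 : Fin n → ℝ) :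
    ∀ j : ℕ, (Fin j → Fin n) → (Fin n → ℝ)
  | 0, _ => x0
  | (j+1), h => scdStep A b c ub xb β Lmax
      (scdIter A b c ub xb β Lmax x0 j (Fin.init h)) (h (Fin.last j))

lemma scdIter_nonneg {m n : ℕ} (A : Matrix (Fin m) (Fin n) ℝ) (b : Fin m → ℝ)
    (c : Fin n → ℝ) (ub : Fin m → ℝ) (xb : Fin n → ℝ) (β Lmax : ℝ)
    (x0 : Fin n → ℝ) (hx0 : ∀ i, 0 ≤ x0 i) :
    ∀ j (h : Fin j → Fin n) i, 0 ≤ scdIter A b c ub xb β Lmax x0 j h i := by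
  intro j
  induction j with
  | zero => intro h i; exact hx0 i
  | succ j ih =>
    intro h i
    exact scdStep_nonneg A b c ub xb β Lmax _ (ih (Fin.init h)) (h (Fin.last j)) i

/-- snoc equivalence for history spaces. -/
def snocE (j n : ℕ) : ((Fin j → Fin n) × Fin n) ≃ (Fin (j+1) → Fin n) where
  toFun p := Fin.snoc p.1 p.2
  invFun h := (Fin.init h, h (Fin.last j))
  left_inv p := by simp
  right_inv h := Fin.snoc_init_self h

lemma sum_hist_le {m n : ℕ} (hn : 0 < n) (A : Matrix (Fin m) (Fin n) ℝ) (b : Fin m → ℝ) (c : Fin n → ℝ)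
    (ub : Fin m → ℝ) (xb : Fin n → ℝ) {β Lmax l : ℝ}
    (hβ : 0 < β) (hL : 0 < Lmax) (hl : l = 1 / β)
    (hLc : ∀ i, β * (∑ j, (A j i) ^ 2) + β⁻¹ ≤ Lmax)
    (xβ : Fin n → ℝ) (hβnn : ∀ i, 0 ≤ xβ i)
    (hβmin : ∀ x : Fin n → ℝ, (∀ i, 0 ≤ x i) →
      fpen A b c ub xb β xβ ≤ fpen A b c ub xb β x)
    (x0 : Fin n → ℝ) (hx0 : ∀ i, 0 ≤ x0 i) (j : ℕ) :
    ∑ h : Fin j → Fin n,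
        (fpen A b c ub xb β (scdIter A b c ub xb β Lmax x0 j h) - fpen A b c ub xb β xβ)
      ≤ ((n : ℝ) - l / (l + Lmax)) ^ j * (fpen A b c ub xb β x0 - fpen A b c ub xb β xβ) := by
  have hl0 : 0 < l := by rw [hl]; positivity
  have hα1 : l / (l + Lmax) ≤ 1 := by
    rw [div_le_one (by linarith)]; linarith
  induction j with
  | zero => simp [scdIter]
  | succ j ih =>
    have key : ∀ g : Fin j → Fin n,
        ∑ v : Fin n, (fpen A b c ub xb β
            (scdStep A b c ub xb β Lmax (scdIter A b c ub xb β Lmax x0 j g) v)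
          - fpen A b c ub xb β xβ)
        ≤ ((n : ℝ) - l / (l + Lmax)) *
            (fpen A b c ub xb β (scdIter A b c ub xb β Lmax x0 j g)
              - fpen A b c ub xb β xβ) := by
      intro g
      have hx := scdIter_nonneg A b c ub xb β Lmax x0 hx0 j g
      have h1 := sum_scdStep_le A b c ub xb hβ hL hl hLc xβ hβnn _ hx
      have h2 : fpen A b c ub xb β xβ ≤ fpen A b c ub xb β (scdIter A b c ub xb β Lmax x0 j g) :=
        hβmin _ hx
      rw [Finset.sum_sub_distrib, Finset.sum_const, Finset.card_univ, Fintype.card_fin,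
        nsmul_eq_mul]
      nlinarith
    have hsplit : ∑ h : Fin (j+1) → Fin n,
        (fpen A b c ub xb β (scdIter A b c ub xb β Lmax x0 (j+1) h) - fpen A b c ub xb β xβ)
        = ∑ g : Fin j → Fin n, ∑ v : Fin n,
          (fpen A b c ub xb β
            (scdStep A b c ub xb β Lmax (scdIter A b c ub xb β Lmax x0 j g) v)
            - fpen A b c ub xb β xβ) := by
      rw [← Equiv.sum_comp (snocE j n)]
      rw [Fintype.sum_prod_type]
      refine Finset.sum_congr rfl fun g _ => Finset.sum_congr rfl fun v _ => ?_
      have h1 : Fin.init (Fin.snoc g v : Fin (j+1) → Fin n) = g := by simp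
      have h2 : (Fin.snoc g v : Fin (j+1) → Fin n) (Fin.last j) = v := by simp
      simp only [snocE, Equiv.coe_fn_mk, scdIter, h1, h2]
    rw [hsplit]
    have step1 : ∑ g : Fin j → Fin n, ∑ v : Fin n,
          (fpen A b c ub xb β
            (scdStep A b c ub xb β Lmax (scdIter A b c ub xb β Lmax x0 j g) v)
            - fpen A b c ub xb β xβ)
        ≤ ∑ g : Fin j → Fin n, ((n : ℝ) - l / (l + Lmax)) *
            (fpen A b c ub xb β (scdIter A b c ub xb β Lmax x0 j g)
              - fpen A b c ub xb β xβ) :=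
      Finset.sum_le_sum fun g _ => key g
    rw [← Finset.mul_sum] at step1
    have hnn : (0:ℝ) ≤ (n : ℝ) - l / (l + Lmax) := by
      have : (1:ℝ) ≤ (n:ℝ) := by exact_mod_cast hn
      linarith
    calc _ ≤ ((n : ℝ) - l / (l + Lmax)) *
          (∑ g : Fin j → Fin n,
            (fpen A b c ub xb β (scdIter A b c ub xb β Lmax x0 j g) - fpen A b c ub xb β xβ))
        := step1
      _ ≤ ((n : ℝ) - l / (l + Lmax)) *
          (((n : ℝ) - l / (l + Lmax)) ^ j * (fpen A b c ub xb β x0 - fpen A b c ub xb β xβ))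
        := mul_le_mul_of_nonneg_left ih hnn
      _ = ((n : ℝ) - l / (l + Lmax)) ^ (j+1) * (fpen A b c ub xb β x0 - fpen A b c ub xb β xβ)
        := by ring

lemma rate_bound (K r M η ε φ0 : ℝ) (hK : 0 < K) (hr0 : 0 ≤ r) (hr1 : r + 1 / K ≤ 1)
    (hη : 0 < η) (hε : 0 < ε) (hφ0 : 0 ≤ φ0) (hφM : φ0 ≤ M) (j : ℕ)
    (hj : K * |Real.log (M / (η * ε))| ≤ (j : ℝ)) :
    r ^ j * φ0 ≤ η * ε := by
  have hrj0 : 0 ≤ r ^ j := pow_nonneg hr0 j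
  rcases le_or_gt M (η * ε) with hM | hM
  · have h1 : r ^ j ≤ 1 := pow_le_one₀ hr0 (by nlinarith [one_div_pos.mpr hK])
    nlinarith
  · have hηε : 0 < η * ε := mul_pos hη hε
    have hM0 : 0 < M := lt_trans hηε hM
    have hC1 : 1 < M / (η * ε) := (one_lt_div hηε).mpr hM
    have hlogC : 0 < Real.log (M / (η * ε)) := Real.log_pos hC1
    rw [abs_of_pos hlogC] at hj
    -- r ≤ exp (-(1/K))
    have hre : r ≤ Real.exp (-(1 / K)) := by
      have := Real.add_one_le_exp (-(1 / K))
      linarith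
    have hrj : r ^ j ≤ Real.exp (-(1 / K)) ^ j := pow_le_pow_left₀ hr0 hre j
    rw [← Real.exp_nat_mul] at hrj
    have hexp : Real.exp ((j : ℝ) * -(1 / K)) ≤ Real.exp (-Real.log (M / (η * ε))) := by
      apply Real.exp_le_exp.mpr
      have h2 : (j:ℝ) * (1 / K) ≥ K * Real.log (M / (η * ε)) * (1 / K) := by
        apply mul_le_mul_of_nonneg_right hj (by positivity)
      have h3 : K * Real.log (M / (η * ε)) * (1 / K) = Real.log (M / (η * ε)) := by
        field_simp
      have : (j:ℝ) * -(1/K) = -((j:ℝ) * (1/K)) := by ring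
      rw [this]
      linarith
    have hfin : r ^ j ≤ η * ε / M := by
      have : Real.exp (-Real.log (M / (η * ε))) = η * ε / M := by
        rw [Real.exp_neg, Real.exp_log (by positivity)]
        field_simp
      linarith
    calc r ^ j * φ0 ≤ r ^ j * M := mul_le_mul_of_nonneg_left hφM hrj0
      _ ≤ (η * ε / M) * M := mul_le_mul_of_nonneg_right hfin hM0.le
      _ = η * ε := by field_simp

open MeasureTheory ProbabilityTheory in
lemma atom_measure {n : ℕ} {Ω : Type*} [MeasurableSpace Ω] (μ : Measure Ω)
    [IsProbabilityMeasure μ] (idx : ℕ → Ω → Fin n)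
    (hunif : ∀ j v, μ {ω | idx j ω = v} = (n : ENNReal)⁻¹)
    (hindep : iIndepFun idx μ)
    (j : ℕ) (h : Fin j → Fin n) :
    μ {ω | ∀ k : Fin j, idx k ω = h k} = ((n : ENNReal)⁻¹) ^ j := by
  classical
  set sets : ℕ → Set (Fin n) := fun k => if hk : k < j then {h ⟨k, hk⟩} else Set.univ with hsets
  have hsm : ∀ k ∈ Finset.range j, MeasurableSet (sets k) := by
    intro k hk
    rw [hsets]
    simp only
    rw [dif_pos (Finset.mem_range.mp hk)]
    exact measurableSet_singleton _
  have hkey := (iIndepFun_iff_measure_inter_preimage_eq_mul.mp hindep) (Finset.range j) hsm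
  have hset_eq : (⋂ k ∈ Finset.range j, idx k ⁻¹' sets k) = {ω | ∀ k : Fin j, idx k ω = h k} := by
    ext ω
    simp only [Set.mem_iInter, Set.mem_preimage, Finset.mem_range, Set.mem_setOf_eq]
    constructor
    · intro H k
      have := H k.1 k.isLt
      rw [hsets] at this
      simp only at this
      rw [dif_pos k.isLt] at this
      simpa using this
    · intro H k hk
      rw [hsets]
      simp only
      rw [dif_pos hk]
      simpa using H ⟨k, hk⟩
  have hprod : ∀ k ∈ Finset.range j, μ (idx k ⁻¹' sets k) = (n : ENNReal)⁻¹ := by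
    intro k hk
    have hkj := Finset.mem_range.mp hk
    have : idx k ⁻¹' sets k = {ω | idx k ω = h ⟨k, hkj⟩} := by
      ext ω
      rw [hsets]
      simp only [Set.mem_preimage]
      rw [dif_pos hkj]
      simp
    rw [this, hunif]
  rw [hset_eq] at hkey
  rw [hkey, Finset.prod_congr rfl hprod, Finset.prod_const, Finset.card_range]

open MeasureTheory ProbabilityTheory in
lemma hist_measure {n : ℕ} {Ω : Type*} [MeasurableSpace Ω] (μ : Measure Ω)
    [IsProbabilityMeasure μ] (idx : ℕ → Ω → Fin n)
    (hmeas : ∀ j, Measurable (idx j))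
    (hunif : ∀ j v, μ {ω | idx j ω = v} = (n : ENNReal)⁻¹)
    (hindep : iIndepFun idx μ)
    (j : ℕ) (P : (Fin j → Fin n) → Prop) [DecidablePred P] :
    μ {ω | P (fun k : Fin j => idx k ω)} =
      ((Finset.univ.filter P).card : ENNReal) * ((n : ENNReal)⁻¹) ^ j := by
  classical
  set E : (Fin j → Fin n) → Set Ω := fun h => {ω | ∀ k : Fin j, idx k ω = h k} with hE
  have hEm : ∀ h, MeasurableSet (E h) := by
    intro h
    have : E h = ⋂ k : Fin j, (idx k) ⁻¹' {h k} := by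
      ext ω; simp [hE]
    rw [this]
    exact MeasurableSet.iInter fun k => (hmeas k) (measurableSet_singleton _)
  have hcover : {ω | P (fun k : Fin j => idx k ω)} = ⋃ h ∈ Finset.univ.filter P, E h := by
    ext ω
    simp only [Set.mem_setOf_eq, Set.mem_iUnion, Finset.mem_filter, Finset.mem_univ, true_and,
      hE]
    constructor
    · intro hP
      exact ⟨fun k => idx k ω, hP, fun k => rfl⟩
    · rintro ⟨h, hP, hω⟩
      have : (fun k : Fin j => idx k ω) = h := funext hω
      rwa [this]
  have hdisj : (↑(Finset.univ.filter P) : Set (Fin j → Fin n)).PairwiseDisjoint E := by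
    intro h1 _ h2 _ hne
    refine Set.disjoint_left.mpr fun ω hω1 hω2 => hne ?_
    funext k
    rw [← hω1 k, ← hω2 k]
  rw [hcover, measure_biUnion_finset hdisj fun h _ => hEm h]
  have : ∀ h ∈ Finset.univ.filter P, μ (E h) = ((n : ENNReal)⁻¹) ^ j := fun h _ =>
    atom_measure μ idx hunif hindep j h
  rw [Finset.sum_congr rfl this, Finset.sum_const, nsmul_eq_mul]

open MeasureTheory ProbabilityTheory in
lemma hist_measurableSet {n : ℕ} {Ω : Type*} [MeasurableSpace Ω]
    (idx : ℕ → Ω → Fin n) (hmeas : ∀ j, Measurable (idx j))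
    (j : ℕ) (P : (Fin j → Fin n) → Prop) [DecidablePred P] :
    MeasurableSet {ω | P (fun k : Fin j => idx k ω)} := by
  classical
  have hcover : {ω | P (fun k : Fin j => idx k ω)}
      = ⋃ h ∈ Finset.univ.filter P, ⋂ k : Fin j, (idx k) ⁻¹' {h k} := by
    ext ω
    simp only [Set.mem_setOf_eq, Set.mem_iUnion, Finset.mem_filter, Finset.mem_univ, true_and,
      Set.mem_iInter, Set.mem_preimage, Set.mem_singleton_iff]
    constructor
    · intro hP
      exact ⟨fun k => idx k ω, hP, fun k => rfl⟩
    · rintro ⟨h, hP, hω⟩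
      have : (fun k : Fin j => idx k ω) = h := funext hω
      rwa [this]
  rw [hcover]
  exact (Finset.univ.filter P).measurableSet_biUnion
    fun h _ => MeasurableSet.iInter fun k => (hmeas k) (measurableSet_singleton _)

set_option maxHeartbeats 1000000 in
/-- Theorem scd, high-probability form: after sufficiently many SCD
iterations, the objective is within ε̄ of optimal with probability at least 1 − η. -/
theorem scd_high_probability_convergence
    {m n : ℕ} (hn : 0 < n)
    (A : Matrix (Fin m) (Fin n) ℝ) (b : Fin m → ℝ) (c : Fin n → ℝ)
    (ub : Fin m → ℝ) (xb : Fin n → ℝ) (β : ℝ) (hβ : 0 < β)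
    -- x(β) : the minimizer of f_β over the nonnegative orthant, fβ* its value
    (xβ : Fin n → ℝ) (hβnn : ∀ j, 0 ≤ xβ j)
    (hβmin : ∀ x : Fin n → ℝ, (∀ j, 0 ≤ x j) →
      fpen A b c ub xb β xβ ≤ fpen A b c ub xb β x)
    (fstar : ℝ) (hfstar : fstar = fpen A b c ub xb β xβ)
    -- the constants L_max = β maxᵢ A₋ᵢᵀA₋ᵢ + β⁻¹ and l = 1/β
    (Lmax l : ℝ)
    (hLmax : Lmax = β * (⨆ i : Fin n, ∑ j, (A j i) ^ 2) + β⁻¹)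
    (hl : l = 1 / β)
    -- the underlying probability space and the i.i.d. uniform coordinate indices
    (Ω : Type*) [MeasurableSpace Ω] (μ : Measure Ω) [IsProbabilityMeasure μ]
    (idx : ℕ → Ω → Fin n)
    (hmeas : ∀ j, Measurable (idx j))
    (hunif : ∀ j v, μ {ω | idx j ω = v} = (n : ENNReal)⁻¹)
    (hindep : iIndepFun idx μ)
    -- the SCD iterates
    (x0 : Fin n → ℝ) (hx0 : ∀ j, 0 ≤ x0 j)
    (X : ℕ → Ω → Fin n → ℝ)
    (hX0 : ∀ ω, X 0 ω = x0)
    (hstep : ∀ j ω, X (j + 1) ω = fun i =>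
      if i = idx j ω then
        max 0 (X j ω i - (1 / Lmax) * gradf A b c ub xb β (X j ω) i)
      else X j ω i)
    -- R bounds the distance of all iterates from x(β), almost surely
    (R : ℝ) (hR : ∀ j, ∀ᵐ ω ∂μ, l2norm (X j ω - xβ) ≤ R)
    -- the probability target and accuracy
    (η εbar : ℝ) (hη0 : 0 < η) (hη1 : η < 1) (hεbar : 0 < εbar)
    (j : ℕ)
    (hj : (n * (l + Lmax) / l) *
        |Real.log ((Lmax / (2 * η * εbar)) *
          (R ^ 2 + (2 / Lmax) * (fpen A b c ub xb β x0 - fstar)))| ≤ (j : ℝ)) :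
    ENNReal.ofReal (1 - η) ≤ μ {ω | fpen A b c ub xb β (X j ω) - fstar < εbar} := by
  classical
  -- basic constants
  have hsup0 : 0 ≤ ⨆ i : Fin n, ∑ k, (A k i) ^ 2 :=
    Real.iSup_nonneg fun i => Finset.sum_nonneg fun _ _ => sq_nonneg _
  have hβinv : 0 < β⁻¹ := inv_pos.mpr hβ
  have hL : 0 < Lmax := by rw [hLmax]; nlinarith
  have hLc : ∀ i, β * (∑ k, (A k i) ^ 2) + β⁻¹ ≤ Lmax := by
    intro i
    rw [hLmax]
    have hb : BddAbove (Set.range fun i : Fin n => ∑ k, (A k i) ^ 2) :=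
      (Set.finite_range _).bddAbove
    have h1 := le_ciSup hb i
    have h2 := mul_le_mul_of_nonneg_left h1 hβ.le
    linarith
  have hl0 : 0 < l := by rw [hl]; positivity
  have hn1 : (1:ℝ) ≤ (n:ℝ) := by exact_mod_cast hn
  -- identify the iterates with the deterministic history iterates
  have hXiter : ∀ j ω, X j ω =
      scdIter A b c ub xb β Lmax x0 j (fun k : Fin j => idx (k : ℕ) ω) := by
    intro j
    induction j with
    | zero => intro ω; rw [hX0]; rfl
    | succ j ih =>
      intro ω
      have hs : X (j+1) ω = scdStep A b c ub xb β Lmax (X j ω) (idx j ω) := hstep j ω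
      rw [hs, ih ω]
      have h1 : Fin.init (fun k : Fin (j+1) => idx (k : ℕ) ω)
          = fun k : Fin j => idx (k : ℕ) ω := by
        funext k; simp [Fin.init, Fin.coe_castSucc]
      have h2 : (fun k : Fin (j+1) => idx (k : ℕ) ω) (Fin.last j) = idx j ω := by
        simp [Fin.val_last]
      simp only [scdIter, h1, h2]
  -- the good event as a history event
  set Q : (Fin j → Fin n) → Prop :=
    fun h => fpen A b c ub xb β (scdIter A b c ub xb β Lmax x0 j h) - fstar < εbar with hQ
  clear_value Q
  have hsetQ : {ω | fpen A b c ub xb β (X j ω) - fstar < εbar}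
      = {ω | Q (fun k : Fin j => idx (k : ℕ) ω)} := by
    ext ω
    simp only [Set.mem_setOf_eq, hQ, hXiter j ω]
  rw [hsetQ]
  -- complement
  have hcompl : {ω | Q (fun k : Fin j => idx (k : ℕ) ω)}
      = {ω | (fun h => ¬ Q h) (fun k : Fin j => idx (k : ℕ) ω)}ᶜ := by
    ext ω; simp
  rw [hcompl]
  have hbm : MeasurableSet {ω | (fun h => ¬ Q h) fun k : Fin j => idx (k : ℕ) ω} :=
    hist_measurableSet idx hmeas j (fun h => ¬ Q h)
  rw [measure_compl hbm (measure_ne_top μ _), measure_univ,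
    hist_measure μ idx hmeas hunif hindep j (fun h => ¬ Q h)]
  set Nbad := (Finset.univ.filter fun h : Fin j → Fin n => ¬ Q h).card with hNbad
  clear_value Nbad
  -- the real-valued Markov bound
  set φ0 : ℝ := fpen A b c ub xb β x0 - fstar with hφ0def
  have hφ0 : 0 ≤ φ0 := by rw [hφ0def, hfstar]; linarith [hβmin x0 hx0]
  have hφnn : ∀ h : Fin j → Fin n,
      0 ≤ fpen A b c ub xb β (scdIter A b c ub xb β Lmax x0 j h) - fstar := by
    intro h
    rw [hfstar]
    linarith [hβmin _ (scdIter_nonneg A b c ub xb β Lmax x0 hx0 j h)]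
  have hsum := sum_hist_le hn A b c ub xb hβ hL hl hLc xβ hβnn hβmin x0 hx0 j
  rw [← hfstar] at hsum
  have hmarkov : (Nbad : ℝ) * εbar ≤ ((n : ℝ) - l / (l + Lmax)) ^ j * φ0 := by
    have h1 : (Nbad : ℝ) * εbar ≤ ∑ h ∈ Finset.univ.filter (fun h : Fin j → Fin n => ¬ Q h),
        (fpen A b c ub xb β (scdIter A b c ub xb β Lmax x0 j h) - fstar) := by
      have := Finset.card_nsmul_le_sum
        (Finset.univ.filter fun h : Fin j → Fin n => ¬ Q h)
        (fun h => fpen A b c ub xb β (scdIter A b c ub xb β Lmax x0 j h) - fstar) εbar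
        (fun h hh => by
          have h2 := (Finset.mem_filter.mp hh).2
          rw [hQ] at h2
          simp only at h2
          exact not_lt.mp h2)
      rw [nsmul_eq_mul] at this
      rw [hNbad]
      exact this
    have h2 : ∑ h ∈ Finset.univ.filter (fun h : Fin j → Fin n => ¬ Q h),
          (fpen A b c ub xb β (scdIter A b c ub xb β Lmax x0 j h) - fstar)
        ≤ ∑ h : Fin j → Fin n,
          (fpen A b c ub xb β (scdIter A b c ub xb β Lmax x0 j h) - fstar) :=
      Finset.sum_le_sum_of_subset_of_nonneg (Finset.filter_subset _ _)
        (fun h _ _ => hφnn h)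
    calc (Nbad : ℝ) * εbar ≤ _ := h1
      _ ≤ _ := h2
      _ ≤ _ := hsum
  clear_value φ0
  -- rate bound
  set K : ℝ := (n : ℝ) * (l + Lmax) / l with hK
  set r : ℝ := ((n : ℝ) - l / (l + Lmax)) / n with hr
  clear_value K r
  have hlL : (0:ℝ) < l + Lmax := by linarith
  have hn0 : (n : ℝ) ≠ 0 := by linarith
  have hKpos : 0 < K := by rw [hK]; positivity
  have hα1 : l / (l + Lmax) ≤ 1 := by rw [div_le_one hlL]; linarith
  have hα0 : 0 < l / (l + Lmax) := div_pos hl0 hlL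
  have hr0 : 0 ≤ r := by
    rw [hr]
    apply div_nonneg _ (by linarith)
    linarith
  have hr1 : r + 1 / K ≤ 1 := by
    have : r + 1 / K = 1 := by
      rw [hr, hK]
      field_simp
      ring
    linarith
  set M : ℝ := Lmax / 2 * (R ^ 2 + (2 / Lmax) * φ0) with hM
  clear_value M
  have hMeq : M = Lmax / 2 * R ^ 2 + φ0 := by
    rw [hM]; field_simp
  have hφM : φ0 ≤ M := by
    rw [hMeq]
    nlinarith [sq_nonneg R]
  have hjM : K * |Real.log (M / (η * εbar))| ≤ (j : ℝ) := by
    have hCeq : (Lmax / (2 * η * εbar)) * (R ^ 2 + (2 / Lmax) * φ0) = M / (η * εbar) := by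
      have e : Lmax / (2 * η * εbar) = (Lmax / 2) / (η * εbar) := by
        rw [div_div, mul_assoc]
      rw [hM, e, div_mul_eq_mul_div]
    rw [← hCeq]
    exact hj
  have hrate := rate_bound K r M η εbar φ0 hKpos hr0 hr1 hη0 hεbar hφ0 hφM j hjM
  -- Nbad ≤ n^j * η
  have hnj0 : (0:ℝ) < (n : ℝ) ^ j := by positivity
  have hpowsplit : ((n : ℝ) - l / (l + Lmax)) ^ j = r ^ j * (n : ℝ) ^ j := by
    rw [← mul_pow]
    congr 1
    rw [hr]
    field_simp
    all_goals ring
  have hNbadR : (Nbad : ℝ) ≤ (n : ℝ) ^ j * η := by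
    have h1 : (Nbad : ℝ) * εbar ≤ (n : ℝ) ^ j * (r ^ j * φ0) := by
      rw [hpowsplit] at hmarkov; nlinarith
    have h2 : (n : ℝ) ^ j * (r ^ j * φ0) ≤ (n : ℝ) ^ j * (η * εbar) :=
      mul_le_mul_of_nonneg_left hrate hnj0.le
    have h3 : (Nbad : ℝ) * εbar ≤ ((n : ℝ) ^ j * η) * εbar := by
      calc (Nbad : ℝ) * εbar ≤ (n : ℝ) ^ j * (η * εbar) := le_trans h1 h2
        _ = ((n : ℝ) ^ j * η) * εbar := by ring
    exact le_of_mul_le_mul_right h3 hεbar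
  -- conclude in ENNReal
  have hbadE : (Nbad : ENNReal) * ((n : ENNReal)⁻¹) ^ j ≤ ENNReal.ofReal η := by
    have hnpos : (0:ℝ) < (n : ℝ) := by linarith
    have e1 : ((n : ENNReal))⁻¹ = ENNReal.ofReal ((n : ℝ)⁻¹) := by
      rw [ENNReal.ofReal_inv_of_pos hnpos, ENNReal.ofReal_natCast]
    have e2 : (Nbad : ENNReal) = ENNReal.ofReal (Nbad : ℝ) := by
      rw [ENNReal.ofReal_natCast]
    rw [e1, e2, ← ENNReal.ofReal_pow (by positivity), ← ENNReal.ofReal_mul (by positivity)]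
    apply ENNReal.ofReal_le_ofReal
    have hinv : ((n : ℝ)⁻¹) ^ j = ((n : ℝ) ^ j)⁻¹ := by rw [inv_pow]
    rw [hinv]
    have hi : (0:ℝ) < ((n : ℝ) ^ j)⁻¹ := by positivity
    have := mul_le_mul_of_nonneg_right hNbadR hi.le
    calc (Nbad : ℝ) * ((n : ℝ) ^ j)⁻¹ ≤ (n : ℝ) ^ j * η * ((n : ℝ) ^ j)⁻¹ := this
      _ = η := by field_simp
  calc ENNReal.ofReal (1 - η) ≤ 1 - ENNReal.ofReal η := by
        apply ENNReal.le_sub_of_add_le_right ENNReal.ofReal_ne_top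
        rw [← ENNReal.ofReal_add (by linarith) hη0.le]
        simp
    _ ≤ 1 - (Nbad : ENNReal) * ((n : ENNReal)⁻¹) ^ j := tsub_le_tsub_left hbadE 1
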